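/- Let 𝕜 be a field, n ≥ 1, and let A be an invertible (n+1)×(n+1) matrix over 𝕜 with inverse M = A⁻¹ = (m_{ij}). Let s, t be indices with m_{t,s} ≠ 0, and let A_{ŝ,t̂} denote the n×n matrix obtained from A by deleting the s-th row and the t-th column. Then A_{ŝ,t̂} is invertible, and for all indices i ≠ t and j ≠ s, the entry of (A_{ŝ,t̂})⁻¹ in the row corresponding to i and the column corresponding to j equals m_{i,j} − m_{i,s}·m_{t,j}/m_{t,s}. -/

import Mathlib

/-- Let `𝕜` be a field, `n ≥ 1`, `A` an invertible `(n+1)×(n+1)` matrix over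
`𝕜` with inverse `M = A⁻¹`, and `s, t` indices with `M t s ≠ 0`. Then the matrix obtained
from `A` by deleting the `s`-th row and `t`-th column is invertible, and for indices `i ≠ t`
and `j ≠ s` the corresponding entry of its inverse equals
`M i j − M i s · M t j / M t s`. -/
theorem stmt8 {𝕜 : Type*} [Field 𝕜] (n : ℕ) (hn : 1 ≤ n)
    (A : Matrix (Fin (n + 1)) (Fin (n + 1)) 𝕜) (hA : IsUnit A)
    (s t : Fin (n + 1)) (h : A⁻¹ t s ≠ 0) :
    IsUnit (A.submatrix s.succAbove t.succAbove) ∧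
    ∀ i j : Fin n, (A.submatrix s.succAbove t.succAbove)⁻¹ i j =
      A⁻¹ (t.succAbove i) (s.succAbove j) -
        A⁻¹ (t.succAbove i) s * A⁻¹ t (s.succAbove j) / A⁻¹ t s := by
  set M := A⁻¹ with hM
  have hAM : A * M = 1 := Matrix.mul_nonsing_inv A ((Matrix.isUnit_iff_isUnit_det A).mp hA)
  set B : Matrix (Fin n) (Fin n) 𝕜 := fun i j =>
    M (t.succAbove i) (s.succAbove j) - M (t.succAbove i) s * M t (s.succAbove j) / M t s
    with hB
  have key : A.submatrix s.succAbove t.succAbove * B = 1 := by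
    ext i j
    have e1 : ∑ x, A (s.succAbove i) x * M x (s.succAbove j)
        = (1 : Matrix (Fin (n+1)) (Fin (n+1)) 𝕜) (s.succAbove i) (s.succAbove j) := by
      rw [← Matrix.mul_apply, hAM]
    have e2 : ∑ x, A (s.succAbove i) x * M x s = 0 := by
      rw [← Matrix.mul_apply, hAM, Matrix.one_apply_ne (Fin.succAbove_ne s i)]
    rw [Fin.sum_univ_succAbove _ t] at e1 e2
    have hone : (1 : Matrix (Fin (n+1)) (Fin (n+1)) 𝕜) (s.succAbove i) (s.succAbove j)
        = (1 : Matrix (Fin n) (Fin n) 𝕜) i j := by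
      by_cases hij : i = j
      · subst hij; simp
      · rw [Matrix.one_apply_ne hij,
          Matrix.one_apply_ne (fun hh => hij (Fin.succAbove_right_injective hh))]
    rw [Matrix.mul_apply]; simp only [Matrix.submatrix_apply, hB]
    have expand : ∀ x : Fin n, A (s.succAbove i) (t.succAbove x) *
        (M (t.succAbove x) (s.succAbove j) - M (t.succAbove x) s * M t (s.succAbove j) / M t s)
        = A (s.succAbove i) (t.succAbove x) * M (t.succAbove x) (s.succAbove j)
          - (M t (s.succAbove j) / M t s) *
            (A (s.succAbove i) (t.succAbove x) * M (t.succAbove x) s) := by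
      intro x; ring
    rw [Finset.sum_congr rfl fun x _ => expand x, Finset.sum_sub_distrib, ← Finset.mul_sum]
    have s1 : ∑ x, A (s.succAbove i) (t.succAbove x) * M (t.succAbove x) (s.succAbove j)
        = (1 : Matrix (Fin (n+1)) (Fin (n+1)) 𝕜) (s.succAbove i) (s.succAbove j)
          - A (s.succAbove i) t * M t (s.succAbove j) := by linear_combination e1
    have s2 : ∑ x, A (s.succAbove i) (t.succAbove x) * M (t.succAbove x) s
        = - (A (s.succAbove i) t * M t s) := by linear_combination e2
    rw [s1, s2, hone]
    field_simp
    ring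
  have hU : IsUnit (A.submatrix s.succAbove t.succAbove) :=
    (Matrix.isUnit_iff_isUnit_det _).mpr (Matrix.isUnit_det_of_right_inverse key)
  refine ⟨hU, fun i j => ?_⟩
  rw [Matrix.inv_eq_right_inv key]
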